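/- Let w be an aperiodic infinite word over an alphabet of size k, let u be a factor of w containing all k letters, and let vu be a factor of w distinct from u that begins with an occurrence of u. Then the abelian class of v has at least k abelian returns in w. -/

import Mathlib

/-- The factor of length `n` of the infinite word `w` starting at position `i`. -/
def wordAt {α : Type*} (w : ℕ → α) (i n : ℕ) : List α :=
  (List.range n).map (fun k => w (i + k))

/-- `u` is a factor of the infinite word `w`. -/
def IsFactorW {α : Type*} (w : ℕ → α) (u : List α) : Prop :=
  ∃ i, u = wordAt w i u.length

/-- `w` is recurrent: every factor occurs infinitely often. -/
def RecurrentW {α : Type*} (w : ℕ → α) : Prop :=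
  ∀ u, IsFactorW w u → ∀ N, ∃ i, N ≤ i ∧ u = wordAt w i u.length

/-- `w` is (purely) periodic. -/
def PeriodicW {α : Type*} (w : ℕ → α) : Prop :=
  ∃ T, 0 < T ∧ ∀ n, w (n + T) = w n

/-- `w` is ultimately periodic. -/
def UltPeriodicW {α : Type*} (w : ℕ → α) : Prop :=
  ∃ T, 0 < T ∧ ∃ n₀, ∀ n, n₀ ≤ n → w (n + T) = w n

/-- Two finite words are abelian equivalent: same number of occurrences of each letter. -/
def AbEquiv {α : Type*} [DecidableEq α] (u v : List α) : Prop :=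
  ∀ a : α, u.count a = v.count a

/-- Positions of occurrences of words abelian equivalent to `u` in `w`. -/
def abOcc {α : Type*} [DecidableEq α] (w : ℕ → α) (u : List α) : Set ℕ :=
  {i | AbEquiv (wordAt w i u.length) u}

/-- The semi-abelian returns to (the abelian class of) `u` in `w`: words extending from one
occurrence of the abelian class of `u` to the next one. -/
def semiAbReturns {α : Type*} [DecidableEq α] (w : ℕ → α) (u : List α) : Set (List α) :=
  {r | ∃ i j, i ∈ abOcc w u ∧ j ∈ abOcc w u ∧ i < j ∧
      (∀ k, i < k → k < j → k ∉ abOcc w u) ∧ r = wordAt w i (j - i)}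

/-- Positions of (exact) occurrences of `u` in `w`. -/
def occW {α : Type*} [DecidableEq α] (w : ℕ → α) (u : List α) : Set ℕ :=
  {i | u = wordAt w i u.length}

/-- The ordinary return words of `u` in `w`. -/
def returnWords {α : Type*} [DecidableEq α] (w : ℕ → α) (u : List α) : Set (List α) :=
  {r | ∃ i j, i ∈ occW w u ∧ j ∈ occW w u ∧ i < j ∧
      (∀ k, i < k → k < j → k ∉ occW w u) ∧ r = wordAt w i (j - i)}

/-- `u` has exactly `k` semi-abelian returns in `w`. -/
def ExactlyKSemiAbReturns {α : Type*} [DecidableEq α] (w : ℕ → α) (u : List α) (k : ℕ) : Prop :=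
  ∃ f : Fin k → List α, Function.Injective f ∧ semiAbReturns w u = Set.range f

/-- `u` has exactly `k` abelian returns in `w`: there are `k` pairwise non-abelian-equivalent
representatives so that every semi-abelian return is abelian equivalent to exactly one of them,
and each representative is realized. -/
def ExactlyKAbReturns {α : Type*} [DecidableEq α] (w : ℕ → α) (u : List α) (k : ℕ) : Prop :=
  ∃ f : Fin k → List α,
    (∀ i j, AbEquiv (f i) (f j) → i = j) ∧
    (∀ r ∈ semiAbReturns w u, ∃ i, AbEquiv r (f i)) ∧
    (∀ i, ∃ r ∈ semiAbReturns w u, AbEquiv r (f i))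

/-- `u` has at most `k` abelian returns in `w`. -/
def AtMostKAbReturns {α : Type*} [DecidableEq α] (w : ℕ → α) (u : List α) (k : ℕ) : Prop :=
  ∃ f : Fin k → List α, ∀ r ∈ semiAbReturns w u, ∃ i, AbEquiv r (f i)

/-- `u` has at least `k` abelian returns in `w`. -/
def AtLeastKAbReturns {α : Type*} [DecidableEq α] (w : ℕ → α) (u : List α) (k : ℕ) : Prop :=
  ∃ f : Fin k → List α,
    (∀ i j, AbEquiv (f i) (f j) → i = j) ∧
    (∀ i, ∃ r ∈ semiAbReturns w u, AbEquiv r (f i))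

/-- `u` has at least two semi-abelian returns in `w`. -/
def AtLeastTwoSemiAbReturns {α : Type*} [DecidableEq α] (w : ℕ → α) (u : List α) : Prop :=
  ∃ r₁ r₂, r₁ ∈ semiAbReturns w u ∧ r₂ ∈ semiAbReturns w u ∧ r₁ ≠ r₂

/-- The factor complexity of `w`. -/
noncomputable def complexityW {α : Type*} (w : ℕ → α) (n : ℕ) : ℕ :=
  {u : List α | u.length = n ∧ IsFactorW w u}.ncard

/-- A Sturmian word: aperiodic binary word with factor complexity `n + 1`. -/
def SturmianW (w : ℕ → Bool) : Prop :=
  ¬ UltPeriodicW w ∧ ∀ n, complexityW w n = n + 1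

/-- Right special factor of a binary word. -/
def RightSpecial (w : ℕ → Bool) (B : List Bool) : Prop :=
  IsFactorW w (B ++ [false]) ∧ IsFactorW w (B ++ [true])

/-- Left special factor of a binary word. -/
def LeftSpecial (w : ℕ → Bool) (B : List Bool) : Prop :=
  IsFactorW w (false :: B) ∧ IsFactorW w (true :: B)

/-- Bispecial factor of a binary word. -/
def Bispecial (w : ℕ → Bool) (B : List Bool) : Prop :=
  RightSpecial w B ∧ LeftSpecial w B

/-- `w` is `c`-balanced. -/
def CBalanced {α : Type*} [DecidableEq α] (w : ℕ → α) (c : ℕ) : Prop :=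
  ∀ u v : List α, IsFactorW w u → IsFactorW w v → u.length = v.length →
    ∀ a : α, |((u.count a : ℤ) - (v.count a : ℤ))| ≤ (c : ℤ)


section StmtAux

lemma wordAt_length' {α : Type*} (w : ℕ → α) (i n : ℕ) : (wordAt w i n).length = n := by
  simp [wordAt]

lemma wordAt_add' {α : Type*} (w : ℕ → α) (i n m : ℕ) :
    wordAt w i (n + m) = wordAt w i n ++ wordAt w (i + n) m := by
  simp [wordAt, List.range_add, Function.comp, add_assoc]

lemma wordAt_one' {α : Type*} (w : ℕ → α) (i : ℕ) : wordAt w i 1 = [w i] := by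
  simp [wordAt, List.range_succ]

lemma wordAt_succ_left' {α : Type*} (w : ℕ → α) (i n : ℕ) :
    wordAt w i (n + 1) = w i :: wordAt w (i + 1) n := by
  simp [wordAt, List.range_succ_eq_map, Function.comp, add_comm, add_assoc, add_left_comm]

lemma wordAt_getElem' {α : Type*} (w : ℕ → α) (i n x : ℕ) (h : x < n) :
    (wordAt w i n)[x]'(by simpa [wordAt] using h) = w (i + x) := by
  simp [wordAt]

lemma count_wordAt_shift {α : Type*} [DecidableEq α] (w : ℕ → α) (i n : ℕ)
    (h : w (i + n) = w i) (a : α) :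
    (wordAt w (i + 1) n).count a = (wordAt w i n).count a := by
  have key : wordAt w i n ++ [w i] = w i :: wordAt w (i + 1) n := by
    have key' : wordAt w i n ++ [w (i + n)] = w i :: wordAt w (i + 1) n := by
      rw [← wordAt_one' w (i + n), ← wordAt_add', wordAt_succ_left']
    rwa [h] at key' 
  have hc := congrArg (List.count a) key
  simp only [List.count_append, List.count_cons, List.count_singleton',
    List.count_nil] at hc
  omega

end StmtAux

/-- If `w` is aperiodic over a `k`-letter alphabet, `u` a factor containing all letters,
and `v ++ u ≠ u` is a factor beginning with an occurrence of `u`, then the abelian class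
of `v` has at least `k` abelian returns. -/
theorem stmt4 {α : Type*} [DecidableEq α] [Fintype α]
    (w : ℕ → α) (hap : ¬ UltPeriodicW w)
    (u v : List α) (hu : IsFactorW w u) (hall : ∀ a : α, a ∈ u)
    (hvu : IsFactorW w (v ++ u)) (hne : v ++ u ≠ u) (hpre : u <+: v ++ u) :
    AtLeastKAbReturns w v (Fintype.card α) := by
  classical
  obtain ⟨p, hp⟩ := hvu
  set n := v.length with hn
  set m := u.length with hm
  have hlen : (v ++ u).length = n + m := by simp [hn, hm]
  rw [hlen] at hp
  have hsplit : wordAt w p (n + m) = wordAt w p n ++ wordAt w (p + n) m := wordAt_add' w p n m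
  have hinj := List.append_inj (hp.trans hsplit) (by simp [wordAt_length', hn])
  have hv : v = wordAt w p n := hinj.1
  have huB : u = wordAt w (p + n) m := hinj.2
  -- u is also the prefix of the occurrence: u = wordAt w p m
  have huA : u = wordAt w p m := by
    obtain ⟨s, hs⟩ := hpre
    have hcomm : wordAt w p (n + m) = wordAt w p (m + n) := by rw [add_comm]
    have hs' : u ++ s = wordAt w p m ++ wordAt w (p + m) n := by
      rw [hs, hp, hcomm, wordAt_add']
    exact (List.append_inj hs' (by simp [wordAt_length', hm])).1
  -- periodicity inside the occurrence
  have hper : ∀ x, x < m → w (p + x) = w (p + n + x) := by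
    intro x hx
    have hA : u[x]? = some (w (p + x)) := by rw [huA]; simp [wordAt, hx]
    have hB : u[x]? = some (w (p + n + x)) := by rw [huB]; simp [wordAt, hx]
    exact Option.some.inj (hA.symm.trans hB)
  -- all positions p..p+m are abelian occurrences of v
  have habocc : ∀ t, t ≤ m → (p + t) ∈ abOcc w v := by
    intro t
    induction t with
    | zero =>
      intro _
      simp only [abOcc, Set.mem_setOf_eq, AbEquiv, add_zero, ← hn, ← hv]
      intro a; trivial
    | succ t ih =>
      intro ht
      have ht' : t ≤ m := Nat.le_of_succ_le ht
      have htm : t < m := ht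
      have hprev := ih ht'
      simp only [abOcc, Set.mem_setOf_eq, AbEquiv, ← hn] at hprev ⊢
      intro a
      have hw : w (p + t + n) = w (p + t) := by
        have := hper t htm
        have e : p + n + t = p + t + n := by ring
        rw [e] at this
        exact this.symm
      have := count_wordAt_shift w (p + t) n hw a
      have e2 : p + t + 1 = p + (t + 1) := by ring
      rw [e2] at this
      rw [this]
      exact hprev a
  -- each letter of u gives a singleton semi-abelian return
  have hret : ∀ a : α, [a] ∈ semiAbReturns w v := by
    intro a
    obtain ⟨t, htm, hta⟩ := List.getElem_of_mem (hall a)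
    have htm' : t < m := by simpa [← hm] using htm
    have hwa : w (p + t) = a := by
      have h1 : u[t]? = some a := by rw [List.getElem?_eq_getElem htm, hta]
      rw [huA] at h1
      simpa [wordAt, htm'] using h1
    refine ⟨p + t, p + t + 1, habocc t (Nat.le_of_lt htm'), ?_, by omega, ?_, ?_⟩
    · have := habocc (t + 1) htm'
      simpa [add_assoc] using this
    · intro k hk1 hk2 _; omega
    · have : p + t + 1 - (p + t) = 1 := by omega
      rw [this, wordAt_one', hwa]
  -- assemble
  refine ⟨fun i => [(Fintype.equivFin α).symm i], ?_, ?_⟩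
  · intro i j h
    have := h ((Fintype.equivFin α).symm i)
    simp only [List.count_singleton, List.count_singleton'] at this
    by_cases hij : (Fintype.equivFin α).symm j = (Fintype.equivFin α).symm i
    · exact ((Fintype.equivFin α).symm.injective hij).symm
    · simp [hij] at this
  · intro i
    exact ⟨[(Fintype.equivFin α).symm i], hret _, fun a => rfl⟩
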